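/- (Topological Yoneda lemma for non-Archimedean groupoids) Let G be an open non-Archimedean topological groupoid with basis 𝒰 of open subgroupoids and families 𝒮_U as in the construction of the canonical étale structure M. Then for all objects x, y ∈ G⁰, the map Φ sending a homomorphism h : M_x → M_y to the family (h_U(U_x))_{x ∈ U ∈ 𝒰} is a bijection from Hom_{G⁰}(M)(x,y) onto the inverse limit lim_{x ∈ U ∈ 𝒰} (G/U)_y of the fibers (G/U)_y over y along the projection maps π_{U,V} for U ⊆ V in 𝒰, i.e. onto the set of families (a_U)_{x∈U∈𝒰} with a_U ∈ (G/U)_y and π_{U,V}(a_U) = a_V whenever U ⊆ V. -/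
import Mathlib


open Set Topology

attribute [local instance] Classical.propDecidable

/-- A small groupoid, presented on its space of morphisms `G`, with objects
identified with unit morphisms.  `comp g h` is only meaningful when
`src g = tgt h`; its values elsewhere are irrelevant junk. -/
structure Groupoidal (G : Type*) where
  src : G → G
  tgt : G → G
  comp : G → G → G
  inv : G → G
  src_src : ∀ g, src (src g) = src g
  tgt_of_src : ∀ g, tgt (src g) = src g
  src_of_tgt : ∀ g, src (tgt g) = tgt g
  tgt_tgt : ∀ g, tgt (tgt g) = tgt g
  comp_src : ∀ g, comp g (src g) = g
  tgt_comp_self : ∀ g, comp (tgt g) g = g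
  src_comp : ∀ g h, src g = tgt h → src (comp g h) = src h
  tgt_comp : ∀ g h, src g = tgt h → tgt (comp g h) = tgt g
  comp_assoc : ∀ g h k, src g = tgt h → src h = tgt k →
    comp (comp g h) k = comp g (comp h k)
  src_inv : ∀ g, src (inv g) = tgt g
  tgt_inv : ∀ g, tgt (inv g) = src g
  comp_inv_self : ∀ g, comp g (inv g) = tgt g
  inv_comp_self : ∀ g, comp (inv g) g = src g

namespace Groupoidal

variable {G : Type*} (S : Groupoidal G)

/-- The set of objects (= unit morphisms) of the groupoid. -/
def units : Set G := {x | S.src x = x}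

/-- Two morphisms are composable when the source of the first matches the
target of the second. -/
def Composable (g h : G) : Prop := S.src g = S.tgt h

/-- Pointwise product of two subsets of a groupoid. -/
def setMul (A B : Set G) : Set G :=
  {k | ∃ g ∈ A, ∃ h ∈ B, S.Composable g h ∧ k = S.comp g h}

/-- Pointwise inverse of a subset of a groupoid. -/
def setInv (A : Set G) : Set G := S.inv '' A

def IsSymmetric (A : Set G) : Prop := S.setInv A = A

def IsUnital (A : Set G) : Prop := S.src '' A ⊆ A ∧ S.tgt '' A ⊆ A

/-- A subgroupoid: a subset closed under inverse and multiplication. -/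
def IsSubgroupoid (A : Set G) : Prop := S.IsSymmetric A ∧ S.setMul A A ⊆ A

/-- A topological groupoid: all structure maps are continuous (multiplication
on the subspace of composable pairs). -/
structure IsTopological [TopologicalSpace G] : Prop where
  continuous_src : Continuous S.src
  continuous_tgt : Continuous S.tgt
  continuous_inv : Continuous S.inv
  continuous_comp :
    Continuous fun p : {p : G × G // S.Composable p.1 p.2} => S.comp p.1.1 p.1.2

/-- An open topological groupoid: the source map is open. -/
def IsOpenGroupoid [TopologicalSpace G] : Prop := IsOpenMap S.src

/-- A non-Archimedean topological groupoid: every unit morphism has a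
neighborhood basis of open subgroupoids. -/
def IsNonArchimedean [TopologicalSpace G] : Prop :=
  ∀ x ∈ S.units, ∀ W ∈ nhds x, ∃ U : Set G,
    IsOpen U ∧ x ∈ U ∧ U ⊆ W ∧ S.IsSubgroupoid U

/-- A standard Borel groupoid structure: all structure maps are Borel. -/
structure IsBorelGroupoid [MeasurableSpace G] : Prop where
  measurable_src : Measurable S.src
  measurable_tgt : Measurable S.tgt
  measurable_inv : Measurable S.inv
  measurable_comp :
    Measurable fun p : {p : G × G // S.Composable p.1 p.2} => S.comp p.1.1 p.1.2

end Groupoidal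

/-- A `Π⁰₂` subset of a topological space: a countable intersection of sets
of the form (closed ∪ open). -/
def IsPi02 {X : Type*} [TopologicalSpace X] (A : Set X) : Prop :=
  ∃ C O : ℕ → Set X, (∀ n, IsClosed (C n)) ∧ (∀ n, IsOpen (O n)) ∧
    A = ⋂ n, C n ∪ O n

/-- A quasi-Polish space: homeomorphic to a `Π⁰₂` subspace of `𝕊^ℕ`, where
`𝕊 = Prop` is the Sierpiński space. -/
def IsQuasiPolish (X : Type*) [TopologicalSpace X] : Prop :=
  ∃ A : Set (ℕ → Prop), IsPi02 A ∧ Nonempty (X ≃ₜ ↥A)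

/-- A σ-locally Polish space: a countable cover by open Polish subspaces. -/
def IsSigmaLocallyPolish (X : Type*) [TopologicalSpace X] : Prop :=
  ∃ V : ℕ → Set X, (∀ n, IsOpen (V n)) ∧ (∀ n, PolishSpace (V n)) ∧
    (⋃ n, V n) = Set.univ

/-- A functor between groupoids presented on their spaces of morphisms. -/
structure GFunctor {G H : Type*} (S : Groupoidal G) (T : Groupoidal H) where
  toFun : G → H
  map_src : ∀ g, toFun (S.src g) = T.src (toFun g)
  map_tgt : ∀ g, toFun (S.tgt g) = T.tgt (toFun g)
  map_comp : ∀ g h, S.Composable g h →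
    toFun (S.comp g h) = T.comp (toFun g) (toFun h)

namespace GFunctor

variable {G H K : Type*} {S : Groupoidal G} {T : Groupoidal H} {R : Groupoidal K}

/-- The identity functor. -/
def id (S : Groupoidal G) : GFunctor S S :=
  ⟨fun g => g, fun _ => rfl, fun _ => rfl, fun _ _ _ => rfl⟩

/-- Composition of functors. -/
def comp (F₂ : GFunctor T R) (F₁ : GFunctor S T) : GFunctor S R where
  toFun := F₂.toFun ∘ F₁.toFun
  map_src g := by simp only [Function.comp_apply, F₁.map_src, F₂.map_src]
  map_tgt g := by simp only [Function.comp_apply, F₁.map_tgt, F₂.map_tgt]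
  map_comp g h hc := by
    have hc' : T.Composable (F₁.toFun g) (F₁.toFun h) := by
      unfold Groupoidal.Composable at hc ⊢
      rw [← F₁.map_src, ← F₁.map_tgt, hc]
    simp only [Function.comp_apply, F₁.map_comp g h hc, F₂.map_comp _ _ hc']

/-- A functor is full if it is surjective on each hom-set. -/
def Full (F : GFunctor S T) : Prop :=
  ∀ x ∈ S.units, ∀ y ∈ S.units, ∀ k : H,
    T.src k = F.toFun x → T.tgt k = F.toFun y →
      ∃ g : G, S.src g = x ∧ S.tgt g = y ∧ F.toFun g = k

/-- A functor is faithful if it is injective on each hom-set. -/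
def Faithful (F : GFunctor S T) : Prop :=
  ∀ g g' : G, S.src g = S.src g' → S.tgt g = S.tgt g' →
    F.toFun g = F.toFun g' → g = g'

end GFunctor

/-- A natural transformation (automatically an isomorphism, between functors
of groupoids); `app` is only meaningful on unit morphisms. -/
structure GNatIso {G H : Type*} {S : Groupoidal G} {T : Groupoidal H}
    (F F' : GFunctor S T) where
  app : G → H
  app_src : ∀ x ∈ S.units, T.src (app x) = F.toFun x
  app_tgt : ∀ x ∈ S.units, T.tgt (app x) = F'.toFun x
  naturality : ∀ g : G,
    T.comp (app (S.tgt g)) (F.toFun g) = T.comp (F'.toFun g) (app (S.src g))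

/-- A Borel functor which is an equivalence of groupoids witnessed by a Borel
inverse functor and Borel natural isomorphisms. -/
def IsBorelEquivalence {G H : Type*} [MeasurableSpace G] [MeasurableSpace H]
    {S : Groupoidal G} {T : Groupoidal H} (F : GFunctor S T) : Prop :=
  Measurable F.toFun ∧
  ∃ F' : GFunctor T S, Measurable F'.toFun ∧
    (∃ α : GNatIso (F.comp F') (GFunctor.id T), Measurable α.app) ∧
    (∃ β : GNatIso (F'.comp F) (GFunctor.id S), Measurable β.app)

namespace Groupoidal

variable {G : Type*} (S : Groupoidal G)

/-- The left translate `g · U` of a subset `U` by a morphism `g`. -/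
def leftTrans (g : G) (U : Set G) : Set G :=
  {k | ∃ u ∈ U, S.Composable g u ∧ k = S.comp g u}

/-- `C` is a left coset of the open subgroupoid `U`. -/
def IsCoset (U C : Set G) : Prop :=
  ∃ g : G, S.src g ∈ U ∧ C = S.leftTrans g U

/-- The space of left cosets `G/U`. -/
def Coset (U : Set G) : Type _ := {C : Set G // S.IsCoset U C}

/-- The quotient map `π_U : σ⁻¹(U) → G/U`. -/
def cosetMk (U : Set G) (g : G) (hg : S.src g ∈ U) : S.Coset U :=
  ⟨S.leftTrans g U, g, hg, rfl⟩

/-- The quotient topology on `G/U`. -/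
def cosetTop [TopologicalSpace G] (U : Set G) :
    TopologicalSpace (S.Coset U) :=
  TopologicalSpace.coinduced
    (fun g : {g : G // S.src g ∈ U} => S.cosetMk U g.val g.prop)
    inferInstance

/-- The fiber `(G/U)_y` of `G/U` over `y` along the target map: cosets all of
whose members have target `y`. -/
def CosetFib (U : Set G) (y : G) : Type _ :=
  {C : S.Coset U // ∀ k ∈ C.val, S.tgt k = y}

/-- The unit coset `U_x ∈ (G/U)_x` for a unit `x ∈ U`. -/
def unitCosetFib (U : Set G) (x : G) (hx : S.src x = x) (hxU : x ∈ U) :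
    S.CosetFib U x :=
  ⟨S.cosetMk U x (by rw [hx]; exact hxU), by
    rintro k ⟨u, hu, hc, rfl⟩
    rw [S.tgt_comp _ _ hc]
    conv_lhs => rw [← hx]
    rw [S.tgt_of_src]
    exact hx⟩

/-- A family of maps `(G/U)_x → (G/U)_y`, `U ∈ 𝒰`, is a homomorphism of the
canonical étale structures `M_x → M_y` when it commutes with all the right
multiplication maps `f_{U,V,T} = (·)·T : G/U → G/V` for `V ∈ 𝒰`, `T ∈ 𝒮 V`
and `U ⊆ T·T⁻¹` (expressed via the underlying sets of cosets). -/
def IsCanonHom (𝒰 : Set (Set G)) (𝒮 : Set G → Set (Set G)) (x y : G)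
    (h : ∀ U : Set G, U ∈ 𝒰 → S.CosetFib U x → S.CosetFib U y) : Prop :=
  ∀ (U : Set G) (hU : U ∈ 𝒰) (V : Set G) (hV : V ∈ 𝒰) (T : Set G),
    T ∈ 𝒮 V → U ⊆ S.setMul T (S.setInv T) →
    ∀ (C : S.CosetFib U x) (D : S.CosetFib V x),
      D.val.val = S.setMul C.val.val T →
      (h V hV D).val.val = S.setMul (h U hU C).val.val T

/-- A family `(a_U)_{x ∈ U ∈ 𝒰}` with `a_U ∈ (G/U)_y` is coherent (i.e. a
member of the inverse limit `lim_{x ∈ U ∈ 𝒰} (G/U)_y`) when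
`π_{U,V}(a_U) = a_V` for `U ⊆ V`, where `π_{U,V} = (·)·V`. -/
def IsCoherent (𝒰 : Set (Set G)) (x y : G)
    (a : ∀ U : Set G, U ∈ 𝒰 → x ∈ U → S.CosetFib U y) : Prop :=
  ∀ (U : Set G) (hU : U ∈ 𝒰) (hxU : x ∈ U)
    (V : Set G) (hV : V ∈ 𝒰) (hxV : x ∈ V), U ⊆ V →
    (a V hV hxV).val.val = S.setMul (a U hU hxU).val.val V

end Groupoidal
namespace Groupoidal

variable {G : Type*} (S : Groupoidal G)

lemma unit_tgt {x : G} (hx : S.src x = x) : S.tgt x = x := by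
  conv_lhs => rw [← hx]
  rw [S.tgt_of_src, hx]

lemma inv_inv (g : G) : S.inv (S.inv g) = g := by
  have h1 : S.tgt (S.inv (S.inv g)) = S.tgt g := by rw [S.tgt_inv, S.src_inv]
  have h2 : S.inv (S.inv g) = S.comp (S.tgt g) (S.inv (S.inv g)) := by
    conv_lhs => rw [← S.tgt_comp_self (S.inv (S.inv g)), h1]
  rw [h2, ← S.comp_inv_self g,
    S.comp_assoc g (S.inv g) (S.inv (S.inv g)) (S.tgt_inv g).symm
      (by rw [S.src_inv, h1]),
    S.comp_inv_self (S.inv g), S.tgt_inv, S.comp_src]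

lemma inv_unit {x : G} (hx : S.src x = x) : S.inv x = x := by
  have h1 : S.src (S.inv x) = x := by rw [S.src_inv, S.unit_tgt hx]
  have := S.comp_src (S.inv x)
  rw [h1] at this
  rw [← this, S.inv_comp_self, hx]

/-- `g • (g⁻¹ • z) = z` when `tgt z = tgt g`. -/
lemma cancel₁ {g z : G} (h : S.tgt z = S.tgt g) :
    S.comp g (S.comp (S.inv g) z) = z := by
  rw [← S.comp_assoc g (S.inv g) z (S.tgt_inv g).symm (by rw [S.src_inv, h]),
    S.comp_inv_self, ← h, S.tgt_comp_self]

variable {U : Set G}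

lemma mem_inv (hU : S.IsSubgroupoid U) {g : G} (hg : g ∈ U) : S.inv g ∈ U := by
  rw [← hU.1]; exact ⟨g, hg, rfl⟩

lemma src_mem (hU : S.IsSubgroupoid U) {g : G} (hg : g ∈ U) : S.src g ∈ U := by
  have : S.src g = S.comp (S.inv g) g := (S.inv_comp_self g).symm
  rw [this]
  exact hU.2 ⟨S.inv g, S.mem_inv hU hg, g, hg, S.src_inv g, rfl⟩

lemma tgt_mem (hU : S.IsSubgroupoid U) {g : G} (hg : g ∈ U) : S.tgt g ∈ U := by
  have : S.tgt g = S.comp g (S.inv g) := (S.comp_inv_self g).symm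
  rw [this]
  exact hU.2 ⟨g, hg, S.inv g, S.mem_inv hU hg, (S.tgt_inv g).symm, rfl⟩

lemma comp_mem (hU : S.IsSubgroupoid U) {g h : G} (hg : g ∈ U) (hh : h ∈ U)
    (hc : S.src g = S.tgt h) : S.comp g h ∈ U :=
  hU.2 ⟨g, hg, h, hh, hc, rfl⟩

lemma unit_sub_mul_inv (hU : S.IsSubgroupoid U) : U ⊆ S.setMul U (S.setInv U) := by
  intro g hg
  refine ⟨g, hg, S.src g, ⟨S.src g, S.src_mem hU hg, S.inv_unit (S.src_src g)⟩,
    (S.tgt_of_src g).symm, (S.comp_src g).symm⟩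

lemma setMul_self_eq (hU : S.IsSubgroupoid U) : S.setMul U U = U := by
  apply Set.Subset.antisymm hU.2
  intro g hg
  exact ⟨g, hg, S.src g, S.src_mem hU hg, (S.tgt_of_src g).symm, (S.comp_src g).symm⟩

lemma self_mem_leftTrans {g : G} (hg : S.src g ∈ U) :
    g ∈ S.leftTrans g U :=
  ⟨S.src g, hg, (S.tgt_of_src g).symm, (S.comp_src g).symm⟩

lemma tgt_of_mem_leftTrans {g k : G} (hk : k ∈ S.leftTrans g U) :
    S.tgt k = S.tgt g := by
  obtain ⟨u, _, hc, rfl⟩ := hk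
  exact S.tgt_comp g u hc

lemma leftTrans_eq_of_mem (hU : S.IsSubgroupoid U) {g g' : G}
    (hg' : g' ∈ S.leftTrans g U) : S.leftTrans g' U = S.leftTrans g U := by
  obtain ⟨u, hu, hc, rfl⟩ := hg'
  apply Set.Subset.antisymm
  · rintro k ⟨u₁, hu₁, hc₁, rfl⟩
    have hsc : S.src (S.comp g u) = S.src u := S.src_comp g u hc
    have hcu : S.src u = S.tgt u₁ := by rw [← hsc]; exact hc₁
    refine ⟨S.comp u u₁, S.comp_mem hU hu hu₁ hcu, ?_, ?_⟩
    · show S.src g = S.tgt (S.comp u u₁)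
      rw [S.tgt_comp u u₁ hcu]; exact hc
    · exact S.comp_assoc g u u₁ hc hcu
  · rintro k ⟨u₂, hu₂, hc₂, rfl⟩
    have htu : S.tgt u₂ = S.tgt u := by rw [← hc₂, ← hc]
    have hcu : S.src (S.inv u) = S.tgt u₂ := by rw [S.src_inv, htu]
    refine ⟨S.comp (S.inv u) u₂, S.comp_mem hU (S.mem_inv hU hu) hu₂ hcu, ?_, ?_⟩
    · show S.src (S.comp g u) = S.tgt (S.comp (S.inv u) u₂)
      rw [S.src_comp g u hc, S.tgt_comp _ _ hcu, S.tgt_inv]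
    · have key : S.comp (S.comp g u) (S.comp (S.inv u) u₂) = S.comp g u₂ := by
        rw [S.comp_assoc g u (S.comp (S.inv u) u₂) hc
          (by rw [S.tgt_comp _ _ hcu, S.tgt_inv]), S.cancel₁ htu]
      exact key.symm

end Groupoidal
namespace Groupoidal

variable {G : Type*} (S : Groupoidal G)

/-- Absorption: `(T·T⁻¹)·T ⊆ T` for a `U`-invariant `U`-small `T`. -/
lemma absorb {T U : Set G} (hTU : S.setMul T U = T)
    (hsm : S.setMul (S.setInv T) T ⊆ U) {v t : G}
    (hv : v ∈ S.setMul T (S.setInv T)) (ht : t ∈ T)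
    (hc : S.src v = S.tgt t) : S.comp v t ∈ T := by
  obtain ⟨t₂, ht₂, s₂', ⟨s₂, hs₂, rfl⟩, hc₂, rfl⟩ := hv
  have hc₂' : S.src t₂ = S.tgt (S.inv s₂) := hc₂
  have hsv : S.src (S.comp t₂ (S.inv s₂)) = S.src (S.inv s₂) :=
    S.src_comp _ _ hc₂'
  have hcst : S.src (S.inv s₂) = S.tgt t := by rw [← hsv]; exact hc
  have hu : S.comp (S.inv s₂) t ∈ U :=
    hsm ⟨S.inv s₂, ⟨s₂, hs₂, rfl⟩, t, ht, hcst, rfl⟩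
  have heq : S.comp (S.comp t₂ (S.inv s₂)) t
      = S.comp t₂ (S.comp (S.inv s₂) t) :=
    S.comp_assoc t₂ (S.inv s₂) t hc₂' hcst
  rw [heq, ← hTU]
  exact ⟨t₂, ht₂, S.comp (S.inv s₂) t, hu,
    by show S.src t₂ = _; rw [S.tgt_comp _ _ hcst]; exact hc₂', rfl⟩

/-- If a unit `w` lies in `T·T⁻¹` then some `t ∈ T` has target `w`. -/
lemma exists_tgt {T : Set G} {w : G} (hw : w ∈ S.setMul T (S.setInv T))
    (hunit : S.src w = w) : ∃ t ∈ T, S.tgt t = w := by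
  obtain ⟨t', _, s', ⟨s, hs, rfl⟩, hc, rfl⟩ := hw
  refine ⟨s, hs, ?_⟩
  have : S.src (S.comp t' (S.inv s)) = S.src (S.inv s) := S.src_comp _ _ hc
  rw [S.src_inv] at this
  rw [← this]; exact hunit

/-- Key computation: `(k·W)·T = (k·t)·V₁` for `t ∈ T` with `tgt t = src k`,
when `W ⊆ T·T⁻¹`, `T·V₁ = T`, `T⁻¹·T ⊆ V₁`. -/
lemma coset_setMul {V₁ T W : Set G}
    (hTV : S.setMul T V₁ = T) (hsm : S.setMul (S.setInv T) T ⊆ V₁)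
    (hWsub : S.IsSubgroupoid W) (hWT : W ⊆ S.setMul T (S.setInv T))
    {k t : G} (hk : S.src k ∈ W) (ht : t ∈ T) (hτt : S.tgt t = S.src k) :
    S.setMul (S.leftTrans k W) T = S.leftTrans (S.comp k t) V₁ := by
  apply Set.Subset.antisymm
  · rintro e ⟨z, ⟨w, hw, hcw, rfl⟩, t₁, ht₁, hc₁, rfl⟩
    -- z = comp k w, element = comp (comp k w) t₁
    have hcw' : S.src k = S.tgt w := hcw
    have hszw : S.src (S.comp k w) = S.src w := S.src_comp _ _ hcw'
    have hwt₁ : S.src w = S.tgt t₁ := by rw [← hszw]; exact hc₁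
    have hwt₁T : S.comp w t₁ ∈ T := S.absorb hTV hsm (hWT hw) ht₁ hwt₁
    have htwt : S.tgt (S.comp w t₁) = S.src k := by
      rw [S.tgt_comp _ _ hwt₁]; exact hcw'.symm
    have e1 : S.comp (S.comp k w) t₁ = S.comp k (S.comp w t₁) :=
      S.comp_assoc k w t₁ hcw' hwt₁
    -- u := (inv t) · (w t₁) ∈ V₁
    have hct : S.src (S.inv t) = S.tgt (S.comp w t₁) := by
      rw [S.src_inv, hτt, htwt]
    have hu : S.comp (S.inv t) (S.comp w t₁) ∈ V₁ :=
      hsm ⟨S.inv t, ⟨t, ht, rfl⟩, S.comp w t₁, hwt₁T, hct, rfl⟩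
    have e2 : S.comp k (S.comp w t₁)
        = S.comp (S.comp k t) (S.comp (S.inv t) (S.comp w t₁)) := by
      rw [S.comp_assoc k t _ (by rw [hτt]) (by rw [S.tgt_comp _ _ hct, S.tgt_inv]),
        S.cancel₁ (by rw [htwt, ← hτt])]
    rw [e1, e2]
    refine ⟨_, hu, ?_, rfl⟩
    show S.src (S.comp k t) = _
    rw [S.src_comp k t (by rw [hτt]), S.tgt_comp _ _ hct, S.tgt_inv]
  · rintro e ⟨u, hu, hcu, rfl⟩
    have hcu' : S.src (S.comp k t) = S.tgt u := hcu
    have hst : S.src (S.comp k t) = S.src t := S.src_comp k t (by rw [hτt])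
    have hctu : S.src t = S.tgt u := by rw [← hst]; exact hcu'
    have htu : S.comp t u ∈ T := by
      rw [← hTV]; exact ⟨t, ht, u, hu, hctu, rfl⟩
    have hτtu : S.tgt (S.comp t u) = S.src k := by
      rw [S.tgt_comp _ _ hctu]; exact hτt
    have e1 : S.comp (S.comp k t) u = S.comp k (S.comp t u) :=
      S.comp_assoc k t u (by rw [hτt]) hctu
    rw [e1]
    exact ⟨k, S.self_mem_leftTrans hk, S.comp t u, htu, hτtu.symm, rfl⟩

end Groupoidal
namespace Groupoidal

variable {G : Type*} [TopologicalSpace G] (S : Groupoidal G)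

lemma setInv_eq_preimage (A : Set G) : S.setInv A = S.inv ⁻¹' A := by
  ext z
  constructor
  · rintro ⟨t, ht, rfl⟩; show S.inv (S.inv t) ∈ A; rw [S.inv_inv]; exact ht
  · intro hz; exact ⟨S.inv z, hz, S.inv_inv z⟩

lemma isOpen_setInv (hTop : S.IsTopological) {A : Set G} (hA : IsOpen A) :
    IsOpen (S.setInv A) := by
  rw [S.setInv_eq_preimage]; exact hA.preimage hTop.continuous_inv

lemma isOpenMap_tgt (hTop : S.IsTopological) (hOpen : IsOpenMap S.src) :
    IsOpenMap S.tgt := by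
  have h1 : IsOpenMap S.inv := by
    intro A hA
    have : S.inv '' A = S.setInv A := rfl
    rw [this, S.setInv_eq_preimage]
    exact hA.preimage hTop.continuous_inv
  have h2 : S.tgt = S.src ∘ S.inv := by
    funext g; show S.tgt g = S.src (S.inv g); rw [S.src_inv]
  rw [h2]
  exact hOpen.comp h1

/-- Continuity of composition in rectangle form. -/
lemma comp_rect (hTop : S.IsTopological) {g₀ h₀ : G}
    (hc : S.src g₀ = S.tgt h₀) {O : Set G} (hO : IsOpen O)
    (hmem : S.comp g₀ h₀ ∈ O) :
    ∃ A B : Set G, IsOpen A ∧ IsOpen B ∧ g₀ ∈ A ∧ h₀ ∈ B ∧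
      ∀ g ∈ A, ∀ h ∈ B, S.src g = S.tgt h → S.comp g h ∈ O := by
  have hcont := hTop.continuous_comp
  have hopen : IsOpen ((fun p : {p : G × G // S.Composable p.1 p.2} =>
      S.comp p.1.1 p.1.2) ⁻¹' O) := hO.preimage hcont
  rw [isOpen_induced_iff] at hopen
  obtain ⟨Ω, hΩo, hΩeq⟩ := hopen
  have hp₀ : ((g₀, h₀) : G × G) ∈ Ω := by
    have : (⟨(g₀, h₀), hc⟩ : {p : G × G // S.Composable p.1 p.2}) ∈
        Subtype.val ⁻¹' Ω := by rw [hΩeq]; exact hmem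
    exact this
  obtain ⟨A, B, hAo, hBo, hgA, hhB, hAB⟩ := isOpen_prod_iff.mp hΩo g₀ h₀ hp₀
  refine ⟨A, B, hAo, hBo, hgA, hhB, fun g hg h hh hch => ?_⟩
  have : (⟨(g, h), hch⟩ : {p : G × G // S.Composable p.1 p.2}) ∈
      Subtype.val ⁻¹' Ω := hAB (Set.mk_mem_prod hg hh)
  rw [hΩeq] at this
  exact this

/-- Around a unit `x` which is a target of some `g ∈ T`, there is a basic
subgroupoid contained in `O` and in `T·T⁻¹`. -/
lemma exists_basic_sub (hTop : S.IsTopological) (hOpen : IsOpenMap S.src)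
    {𝒰 : Set (Set G)}
    (hbasis : ∀ x ∈ S.units, ∀ W ∈ nhds x, ∃ U ∈ 𝒰, x ∈ U ∧ U ⊆ W)
    {x : G} (hx : S.src x = x) {T : Set G} (hTo : IsOpen T) {g : G}
    (hgT : g ∈ T) (hτ : S.tgt g = x) {O : Set G} (hOo : IsOpen O)
    (hxO : x ∈ O) :
    ∃ W ∈ 𝒰, x ∈ W ∧ W ⊆ O ∧ W ⊆ S.setMul T (S.setInv T) := by
  have hcxg : S.src x = S.tgt g := by rw [hx, hτ]
  have hmem : S.comp x g ∈ T := by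
    have : S.comp x g = g := by rw [← hτ, S.tgt_comp_self]
    rw [this]; exact hgT
  obtain ⟨A, B, hAo, hBo, hxA, hgB, hrect⟩ := S.comp_rect hTop hcxg hTo hmem
  set W' := O ∩ A ∩ S.src ⁻¹' (S.tgt '' (B ∩ T)) with hW'
  have hW'o : IsOpen W' :=
    ((hOo.inter hAo).inter
      ((S.isOpenMap_tgt hTop hOpen _ (hBo.inter hTo)).preimage hTop.continuous_src))
  have hxW' : x ∈ W' := by
    refine ⟨⟨hxO, hxA⟩, ?_⟩
    show S.src x ∈ S.tgt '' (B ∩ T)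
    rw [hx, ← hτ]
    exact ⟨g, ⟨hgB, hgT⟩, rfl⟩
  obtain ⟨U, hU, hxU, hUW'⟩ := hbasis x hx W' (hW'o.mem_nhds hxW')
  refine ⟨U, hU, hxU, fun v hv => ((hUW' hv).1).1, fun v hv => ?_⟩
  obtain ⟨⟨_, hvA⟩, hvσ⟩ := hUW' hv
  obtain ⟨s, ⟨hsB, hsT⟩, hτs⟩ := hvσ
  have hcvs : S.src v = S.tgt s := hτs.symm
  have hvsT : S.comp v s ∈ T := hrect v hvA s hsB hcvs
  have hkey : v = S.comp (S.comp v s) (S.inv s) := by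
    rw [S.comp_assoc v s (S.inv s) hcvs (S.tgt_inv s).symm,
      S.comp_inv_self, ← hcvs, S.comp_src]
  exact ⟨S.comp v s, hvsT, S.inv s, ⟨s, hsT, rfl⟩,
    by show S.src (S.comp v s) = _; rw [S.src_comp v s hcvs, S.tgt_inv], hkey⟩

/-- In an open groupoid, the product of two open sets is open. -/
lemma isOpen_setMul (hTop : S.IsTopological) (hOpen : IsOpenMap S.src)
    {R T : Set G} (hRo : IsOpen R) (hTo : IsOpen T) :
    IsOpen (S.setMul R T) := by
  rw [isOpen_iff_forall_mem_open]
  rintro q₀ ⟨r₀, hr₀, t₀, ht₀, hc₀, rfl⟩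
  have hc₀' : S.src r₀ = S.tgt t₀ := hc₀
  have hcq : S.src (S.comp r₀ t₀) = S.tgt (S.inv t₀) := by
    rw [S.src_comp _ _ hc₀', S.tgt_inv]
  have hmem : S.comp (S.comp r₀ t₀) (S.inv t₀) ∈ R := by
    have : S.comp (S.comp r₀ t₀) (S.inv t₀) = r₀ := by
      rw [S.comp_assoc r₀ t₀ (S.inv t₀) hc₀' (S.tgt_inv t₀).symm,
        S.comp_inv_self, ← hc₀', S.comp_src]
    rw [this]; exact hr₀
  obtain ⟨A, B, hAo, hBo, hqA, htB, hrect⟩ := S.comp_rect hTop hcq hRo hmem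
  refine ⟨A ∩ S.src ⁻¹' (S.tgt '' (B ∩ S.setInv T)), ?_, ?_, ?_⟩
  · rintro q' ⟨hq'A, hq'σ⟩
    obtain ⟨b, ⟨hbB, hbT⟩, hτb⟩ := hq'σ
    obtain ⟨t', ht', rfl⟩ := hbT
    have hcq' : S.src q' = S.tgt (S.inv t') := hτb.symm
    have hr' : S.comp q' (S.inv t') ∈ R := hrect q' hq'A _ hbB hcq'
    have hkey : q' = S.comp (S.comp q' (S.inv t')) t' := by
      rw [S.comp_assoc q' (S.inv t') t' hcq' (by rw [S.src_inv]),
        S.inv_comp_self, ← S.tgt_inv t', ← hcq', S.comp_src]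
    exact ⟨S.comp q' (S.inv t'), hr', t', ht',
      by show S.src _ = _; rw [S.src_comp _ _ hcq', S.src_inv], hkey⟩
  · exact hAo.inter
      (((S.isOpenMap_tgt hTop hOpen) _ (hBo.inter (S.isOpen_setInv hTop hTo))).preimage
        hTop.continuous_src)
  · refine ⟨hqA, ?_⟩
    show S.src (S.comp r₀ t₀) ∈ S.tgt '' (B ∩ S.setInv T)
    rw [S.src_comp _ _ hc₀']
    exact ⟨S.inv t₀, ⟨htB, t₀, ht₀, rfl⟩, by rw [S.tgt_inv]⟩

/-- The image in `G/U` of an open invariant set of morphisms is open. -/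
lemma isOpen_cosetImage {U : Set G} {Q : Set G} (hQo : IsOpen Q)
    (hQi : S.setMul Q U ⊆ Q) :
    IsOpen[S.cosetTop U] {C : S.Coset U |
      ∃ (q : G) (hq : S.src q ∈ U), q ∈ Q ∧ C = S.cosetMk U q hq} := by
  show IsOpen[TopologicalSpace.coinduced _ _] _
  rw [isOpen_coinduced]
  have : (fun g : {g : G // S.src g ∈ U} => S.cosetMk U g.val g.prop) ⁻¹'
      {C : S.Coset U | ∃ (q : G) (hq : S.src q ∈ U), q ∈ Q ∧ C = S.cosetMk U q hq}
      = Subtype.val ⁻¹' Q := by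
    ext ⟨g, hg⟩
    constructor
    · rintro ⟨q, hq, hqQ, heq⟩
      have hset : S.leftTrans g U = S.leftTrans q U := congrArg Subtype.val heq
      have hgmem : g ∈ S.leftTrans q U := by
        rw [← hset]; exact S.self_mem_leftTrans hg
      obtain ⟨u, hu, hcu, rfl⟩ := hgmem
      exact hQi ⟨q, hqQ, u, hu, hcu, rfl⟩
    · intro hgQ
      exact ⟨g, hg, hgQ, rfl⟩
  rw [this]
  exact hQo.preimage continuous_subtype_val

end Groupoidal

/-- **Topological Yoneda lemma for non-Archimedean groupoids.**  Let `G` be an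
open non-Archimedean topological groupoid with a basis `𝒰` of open
subgroupoids and families `𝒮_U` of `U`-invariant `U`-small open subsets of
`σ⁻¹(U)` descending to bases of open sections of `G/U`, with `U ∈ 𝒮_U`, as in
the construction of the canonical étale structure `M`.  Then for all objects
`x, y`, evaluation at the unit cosets `U_x` is a bijection from the set of
homomorphisms `M_x → M_y` onto the inverse limit `lim_{x ∈ U ∈ 𝒰} (G/U)_y`
along the projections `π_{U,V}` for `U ⊆ V` in `𝒰`. -/
theorem topological_yoneda_nonarchimedean
    {G : Type*} [TopologicalSpace G]
    (S : Groupoidal G) (hTop : S.IsTopological) (hOpen : IsOpenMap S.src)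
    (𝒰 : Set (Set G))
    (h𝒰 : ∀ U ∈ 𝒰, IsOpen U ∧ S.IsSubgroupoid U)
    (hbasis : ∀ x ∈ S.units, ∀ W ∈ nhds x, ∃ U ∈ 𝒰, x ∈ U ∧ U ⊆ W)
    (𝒮 : Set G → Set (Set G))
    (h𝒮mem : ∀ U ∈ 𝒰, U ∈ 𝒮 U)
    (h𝒮props : ∀ U ∈ 𝒰, ∀ T ∈ 𝒮 U, IsOpen T ∧ T ⊆ S.src ⁻¹' U ∧
      S.setMul T U = T ∧ S.setMul (S.setInv T) T ⊆ U)
    (h𝒮basis : ∀ U ∈ 𝒰,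
      @TopologicalSpace.IsTopologicalBasis (S.Coset U) (S.cosetTop U)
        {B | ∃ T ∈ 𝒮 U, B = {C : S.Coset U |
          ∃ (g : G) (hg : S.src g ∈ U), g ∈ T ∧ C = S.cosetMk U g hg}})
    (x y : G) (hx : S.src x = x) (hy : S.src y = y) :
    (∀ h : {h : ∀ U : Set G, U ∈ 𝒰 → S.CosetFib U x → S.CosetFib U y //
        S.IsCanonHom 𝒰 𝒮 x y h},
      S.IsCoherent 𝒰 x y fun U hU hxU =>
        h.val U hU (S.unitCosetFib U x hx hxU)) ∧
    (∀ h h' : {h : ∀ U : Set G, U ∈ 𝒰 → S.CosetFib U x → S.CosetFib U y //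
        S.IsCanonHom 𝒰 𝒮 x y h},
      (∀ (U : Set G) (hU : U ∈ 𝒰) (hxU : x ∈ U),
        h.val U hU (S.unitCosetFib U x hx hxU) =
          h'.val U hU (S.unitCosetFib U x hx hxU)) → h = h') ∧
    (∀ a : ∀ U : Set G, U ∈ 𝒰 → x ∈ U → S.CosetFib U y,
      S.IsCoherent 𝒰 x y a →
      ∃ h : {h : ∀ U : Set G, U ∈ 𝒰 → S.CosetFib U x → S.CosetFib U y //
          S.IsCanonHom 𝒰 𝒮 x y h},
        ∀ (U : Set G) (hU : U ∈ 𝒰) (hxU : x ∈ U),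
          h.val U hU (S.unitCosetFib U x hx hxU) = a U hU hxU) := by
  have hcxx : S.comp x x = x := by
    have := S.comp_src x; rw [hx] at this; exact this
  -- every coset in the fiber over x has a "presentation" x·W·R
  have hexpres : ∀ (U : Set G) (hU : U ∈ 𝒰) (C : S.CosetFib U x),
      ∃ (W : Set G) (_ : W ∈ 𝒰) (_ : x ∈ W) (R : Set G) (_ : R ∈ 𝒮 U) (g : G),
        W ⊆ S.setMul R (S.setInv R) ∧ g ∈ R ∧ S.tgt g = x ∧ S.src g ∈ U ∧
        C.val.val = S.leftTrans g U ∧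
        C.val.val = S.setMul (S.leftTrans x W) R := by
    intro U hU C
    letI := S.cosetTop U
    obtain ⟨B, hBmem, hCB, -⟩ := (h𝒮basis U hU).exists_subset_of_mem_open
        (Set.mem_univ C.val) isOpen_univ
    obtain ⟨R, hR, rfl⟩ := hBmem
    obtain ⟨g, hgσ, hgR, hmk⟩ := hCB
    have hset : C.val.val = S.leftTrans g U := congrArg Subtype.val hmk
    have hgτ : S.tgt g = x := by
      apply C.prop g; rw [hset]; exact S.self_mem_leftTrans hgσ
    have hRp := h𝒮props U hU R hR
    obtain ⟨W, hW, hxW, -, hWR⟩ := S.exists_basic_sub hTop hOpen hbasis hx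
      hRp.1 hgR hgτ isOpen_univ (Set.mem_univ x)
    refine ⟨W, hW, hxW, R, hR, g, hWR, hgR, hgτ, hgσ, hset, ?_⟩
    have hxx : S.src x ∈ W := by rw [hx]; exact hxW
    have e := S.coset_setMul hRp.2.2.1 hRp.2.2.2 (h𝒰 W hW).2 hWR hxx hgR
      (by rw [hgτ, hx])
    have hcxg : S.comp x g = g := by rw [← hgτ]; exact S.tgt_comp_self g
    rw [e, hcxg]; exact hset
  refine ⟨?_, ?_, ?_⟩
  · -- part 1: coherence of the image
    intro h U hU hxU V hV hxV hUV
    have hVp := h𝒮props V hV V (h𝒮mem V hV)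
    have hsub : U ⊆ S.setMul V (S.setInv V) :=
      fun z hz => S.unit_sub_mul_inv (h𝒰 V hV).2 (hUV hz)
    apply h.prop U hU V hV V (h𝒮mem V hV) hsub
      (S.unitCosetFib U x hx hxU) (S.unitCosetFib V x hx hxV)
    show S.leftTrans x V = S.setMul (S.leftTrans x U) V
    rw [S.coset_setMul hVp.2.2.1 hVp.2.2.2 (h𝒰 U hU).2 hsub
      (by rw [hx]; exact hxU) hxV (by rw [S.unit_tgt hx, hx]), hcxx]
  · -- part 2: injectivity
    intro h h' hagree
    apply Subtype.ext
    funext U hU C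
    obtain ⟨W, hW, hxW, R, hR, g, hWR, hgR, hgτ, hgσ, hset, hset2⟩ :=
      hexpres U hU C
    have e1 := h.prop W hW U hU R hR hWR (S.unitCosetFib W x hx hxW) C
      (by show C.val.val = S.setMul (S.leftTrans x W) R; exact hset2)
    have e2 := h'.prop W hW U hU R hR hWR (S.unitCosetFib W x hx hxW) C
      (by show C.val.val = S.setMul (S.leftTrans x W) R; exact hset2)
    apply Subtype.ext; apply Subtype.ext
    rw [e1, e2, hagree W hW hxW]
  · -- part 3: surjectivity
    intro a hcoh
    -- claim A: computing a_W · R via a finer W₁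
    have hclaimA : ∀ (W : Set G) (hW : W ∈ 𝒰) (hxW : x ∈ W)
        (U₂ : Set G) (hU₂ : U₂ ∈ 𝒰) (R : Set G) (hR : R ∈ 𝒮 U₂)
        (hWR : W ⊆ S.setMul R (S.setInv R))
        (W₁ : Set G) (hW₁ : W₁ ∈ 𝒰) (hxW₁ : x ∈ W₁) (hsub : W₁ ⊆ W)
        (m : G) (hmσ : S.src m ∈ W₁)
        (hmset : (a W₁ hW₁ hxW₁).val.val = S.leftTrans m W₁)
        (r₁ : G) (hr₁ : r₁ ∈ R) (hτr₁ : S.tgt r₁ = S.src m),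
        S.setMul (a W hW hxW).val.val R = S.leftTrans (S.comp m r₁) U₂ := by
      intro W hW hxW U₂ hU₂ R hR hWR W₁ hW₁ hxW₁ hsub m hmσ hmset r₁ hr₁ hτr₁
      have hWp := h𝒮props W hW W (h𝒮mem W hW)
      have hcohWW := hcoh W₁ hW₁ hxW₁ W hW hxW hsub
      have hWW : W₁ ⊆ S.setMul W (S.setInv W) :=
        fun z hz => S.unit_sub_mul_inv (h𝒰 W hW).2 (hsub hz)
      obtain ⟨t', ht'W, hτt'⟩ := S.exists_tgt (hWW hmσ) (S.src_src m)
      have haW : (a W hW hxW).val.val = S.leftTrans (S.comp m t') W := by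
        rw [hcohWW, hmset,
          S.coset_setMul hWp.2.2.1 hWp.2.2.2 (h𝒰 W₁ hW₁).2 hWW hmσ ht'W hτt']
      have hRp := h𝒮props U₂ hU₂ R hR
      have ht'inv : S.inv t' ∈ S.setMul R (S.setInv R) :=
        hWR (S.mem_inv (h𝒰 W hW).2 ht'W)
      have hct' : S.src (S.inv t') = S.tgt r₁ := by
        rw [S.src_inv, hτt', hτr₁]
      have hr₂ : S.comp (S.inv t') r₁ ∈ R :=
        S.absorb hRp.2.2.1 hRp.2.2.2 ht'inv hr₁ hct'
      have hτr₂ : S.tgt (S.comp (S.inv t') r₁) = S.src (S.comp m t') := by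
        rw [S.tgt_comp _ _ hct', S.tgt_inv, S.src_comp m t' (by rw [hτt'])]
      have hσmt' : S.src (S.comp m t') ∈ W := by
        rw [S.src_comp m t' (by rw [hτt'])]
        exact S.src_mem (h𝒰 W hW).2 ht'W
      have hmain := S.coset_setMul hRp.2.2.1 hRp.2.2.2 (h𝒰 W hW).2 hWR
        hσmt' hr₂ hτr₂
      have hsimp : S.comp (S.comp m t') (S.comp (S.inv t') r₁) = S.comp m r₁ := by
        rw [S.comp_assoc m t' _ (by rw [hτt'])
          (by rw [S.tgt_comp _ _ hct', S.tgt_inv]),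
          S.cancel₁ (by rw [hτr₁, ← hτt'])]
      rw [haW, hmain, hsimp]
    -- the homomorphism compatibility of presented values
    have hhomval : ∀ (U : Set G) (hU : U ∈ 𝒰) (V : Set G) (hV : V ∈ 𝒰)
        (T : Set G) (hT : T ∈ 𝒮 V) (hUT : U ⊆ S.setMul T (S.setInv T))
        (C : S.CosetFib U x) (D : S.CosetFib V x)
        (hD : D.val.val = S.setMul C.val.val T)
        (E : S.CosetFib U y) (E' : S.CosetFib V y),
        (∃ (W : Set G) (hW : W ∈ 𝒰) (hxW : x ∈ W) (R : Set G) (_ : R ∈ 𝒮 U),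
          W ⊆ S.setMul R (S.setInv R) ∧
          C.val.val = S.setMul (S.leftTrans x W) R ∧
          E.val.val = S.setMul (a W hW hxW).val.val R) →
        (∃ (W' : Set G) (hW' : W' ∈ 𝒰) (hxW' : x ∈ W') (R' : Set G)
            (_ : R' ∈ 𝒮 V),
          W' ⊆ S.setMul R' (S.setInv R') ∧
          D.val.val = S.setMul (S.leftTrans x W') R' ∧
          E'.val.val = S.setMul (a W' hW' hxW').val.val R') →
        E'.val.val = S.setMul E.val.val T := by
      intro U hU V hV T hT hUT C D hD E E' hPE hPE'
      obtain ⟨W, hW, hxW, R, hR, hWR, hCset, hEset⟩ := hPE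
      obtain ⟨W', hW', hxW', R', hR', hWR', hDset, hE'set⟩ := hPE'
      have hRp := h𝒮props U hU R hR
      have hR'p := h𝒮props V hV R' hR'
      have hTp := h𝒮props V hV T hT
      have hxxW : S.src x ∈ W := by rw [hx]; exact hxW
      have hxxW' : S.src x ∈ W' := by rw [hx]; exact hxW'
      -- rep g of C inside R
      obtain ⟨g, hgR, hgτ⟩ := S.exists_tgt (hWR hxW) hx
      have hC1 : C.val.val = S.leftTrans g U := by
        have e := S.coset_setMul hRp.2.2.1 hRp.2.2.2 (h𝒰 W hW).2 hWR hxxW hgR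
          (by rw [hgτ, hx])
        have hcxg : S.comp x g = g := by rw [← hgτ]; exact S.tgt_comp_self g
        rw [hCset, e, hcxg]
      have hgσ : S.src g ∈ U := hRp.2.1 hgR
      -- D as a coset of an element of Q = R·T
      obtain ⟨t₁, ht₁T, hτt₁⟩ := S.exists_tgt (hUT hgσ) (S.src_src g)
      have hD2 : D.val.val = S.leftTrans (S.comp g t₁) V := by
        rw [hD, hC1,
          S.coset_setMul hTp.2.2.1 hTp.2.2.2 (h𝒰 U hU).2 hUT hgσ ht₁T hτt₁]
      have hq₀Q : S.comp g t₁ ∈ S.setMul R T :=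
        ⟨g, hgR, t₁, ht₁T, hτt₁.symm, rfl⟩
      have hq₀σ : S.src (S.comp g t₁) ∈ V := by
        rw [S.src_comp g t₁ hτt₁.symm]; exact hTp.2.1 ht₁T
      -- rep g' of D inside R'
      obtain ⟨g', hg'R', hg'τ⟩ := S.exists_tgt (hWR' hxW') hx
      have hD3 : D.val.val = S.leftTrans g' V := by
        have e := S.coset_setMul hR'p.2.2.1 hR'p.2.2.2 (h𝒰 W' hW').2 hWR' hxxW'
          hg'R' (by rw [hg'τ, hx])
        have hcxg : S.comp x g' = g' := by rw [← hg'τ]; exact S.tgt_comp_self g'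
        rw [hDset, e, hcxg]
      -- Q is open and invariant
      have hQo : IsOpen (S.setMul R T) := S.isOpen_setMul hTop hOpen hRp.1 hTp.1
      have hQV : S.setMul (S.setMul R T) V ⊆ S.setMul R T := by
        rintro e ⟨q, ⟨r, hr, t, ht, hcrt, rfl⟩, v, hv, hcv, rfl⟩
        have hcrt' : S.src r = S.tgt t := hcrt
        have hcv' : S.src (S.comp r t) = S.tgt v := hcv
        have hctv : S.src t = S.tgt v := by
          rw [← S.src_comp r t hcrt']; exact hcv'
        have htv : S.comp t v ∈ T := by
          rw [← hTp.2.2.1]; exact ⟨t, ht, v, hv, hctv, rfl⟩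
        rw [S.comp_assoc r t v hcrt' hctv]
        exact ⟨r, hr, S.comp t v, htv,
          by show S.src r = _; rw [S.tgt_comp _ _ hctv]; exact hcrt', rfl⟩
      letI := S.cosetTop V
      have hBQopen := S.isOpen_cosetImage hQo hQV
      have hDQ : D.val ∈ {C : S.Coset V |
          ∃ (q : G) (hq : S.src q ∈ V), q ∈ S.setMul R T ∧ C = S.cosetMk V q hq} :=
        ⟨S.comp g t₁, hq₀σ, hq₀Q, Subtype.ext hD2⟩
      have hBR'open : IsOpen {C : S.Coset V |
          ∃ (g : G) (hg : S.src g ∈ V), g ∈ R' ∧ C = S.cosetMk V g hg} :=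
        (h𝒮basis V hV).isOpen ⟨R', hR', rfl⟩
      have hDR' : D.val ∈ {C : S.Coset V |
          ∃ (g : G) (hg : S.src g ∈ V), g ∈ R' ∧ C = S.cosetMk V g hg} :=
        ⟨g', hR'p.2.1 hg'R', hg'R', Subtype.ext hD3⟩
      obtain ⟨B, hBmem, hDB, hBsub⟩ :=
        (h𝒮basis V hV).exists_subset_of_mem_open (Set.mem_inter hDQ hDR')
          (hBQopen.inter hBR'open)
      obtain ⟨R'', hR'', rfl⟩ := hBmem
      obtain ⟨g'', hg''σ, hg''R'', hmk''⟩ := hDB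
      have hg''τ : S.tgt g'' = x := by
        apply D.prop g''
        rw [congrArg Subtype.val hmk'']
        exact S.self_mem_leftTrans hg''σ
      have hR''p := h𝒮props V hV R'' hR''
      obtain ⟨W₁, hW₁, hxW₁, hW₁sub, hW₁R''⟩ := S.exists_basic_sub hTop hOpen
        hbasis hx hR''p.1 hg''R'' hg''τ ((h𝒰 W hW).1.inter (h𝒰 W' hW').1)
        ⟨hxW, hxW'⟩
      obtain ⟨m, hmσ, hmset⟩ := (a W₁ hW₁ hxW₁).val.prop
      obtain ⟨r''₁, hr''₁, hτr''₁⟩ := S.exists_tgt (hW₁R'' hmσ) (S.src_src m)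
      have hmkr'' : (S.cosetMk V r''₁ (hR''p.2.1 hr''₁)) ∈
          {C : S.Coset V | ∃ (g : G) (hg : S.src g ∈ V),
            g ∈ R'' ∧ C = S.cosetMk V g hg} :=
        ⟨r''₁, hR''p.2.1 hr''₁, hr''₁, rfl⟩
      obtain ⟨hq1mem, hr'mem⟩ := hBsub hmkr''
      obtain ⟨q, hqσ, hqQ, hqeq⟩ := hq1mem
      have hsetq : S.leftTrans r''₁ V = S.leftTrans q V := congrArg Subtype.val hqeq
      have hτq : S.tgt q = S.src m := by
        have hqmem : q ∈ S.leftTrans r''₁ V := by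
          rw [hsetq]; exact S.self_mem_leftTrans hqσ
        rw [← hτr''₁]; exact S.tgt_of_mem_leftTrans hqmem
      obtain ⟨r₁, hr₁R, t₂, ht₂T, hcr₁, rfl⟩ := hqQ
      have hτr₁ : S.tgt r₁ = S.src m := by
        rw [← S.tgt_comp r₁ t₂ hcr₁]; exact hτq
      obtain ⟨r', hr'σ, hr'R', hr'eq⟩ := hr'mem
      have hsetr' : S.leftTrans r''₁ V = S.leftTrans r' V := congrArg Subtype.val hr'eq
      have hτr' : S.tgt r' = S.src m := by
        have hr'mem2 : r' ∈ S.leftTrans r''₁ V := by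
          rw [hsetr']; exact S.self_mem_leftTrans hr'σ
        rw [← hτr''₁]; exact S.tgt_of_mem_leftTrans hr'mem2
      -- compute E and E·T
      have hEA : E.val.val = S.leftTrans (S.comp m r₁) U := by
        rw [hEset]
        exact hclaimA W hW hxW U hU R hR hWR W₁ hW₁ hxW₁
          (fun z hz => (hW₁sub hz).1) m hmσ hmset r₁ hr₁R hτr₁
      have hkσ : S.src (S.comp m r₁) ∈ U := by
        rw [S.src_comp m r₁ (by rw [hτr₁])]; exact hRp.2.1 hr₁R
      have hτt₂' : S.tgt t₂ = S.src (S.comp m r₁) := by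
        rw [S.src_comp m r₁ (by rw [hτr₁])]; exact hcr₁.symm
      have hET : S.setMul E.val.val T = S.leftTrans (S.comp m (S.comp r₁ t₂)) V := by
        have e1 := S.coset_setMul hTp.2.2.1 hTp.2.2.2 (h𝒰 U hU).2 hUT hkσ ht₂T hτt₂'
        have e2 : S.comp (S.comp m r₁) t₂ = S.comp m (S.comp r₁ t₂) :=
          S.comp_assoc m r₁ t₂ (by rw [hτr₁]) hcr₁
        rw [hEA, e1, e2]
      have hE'A : E'.val.val = S.leftTrans (S.comp m r') V := by
        rw [hE'set]
        exact hclaimA W' hW' hxW' V hV R' hR' hWR' W₁ hW₁ hxW₁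
          (fun z hz => (hW₁sub hz).2) m hmσ hmset r' hr'R' hτr'
      -- transport along the common coset
      have hq' : S.comp r₁ t₂ ∈ S.leftTrans r' V := by
        rw [← hsetr', hsetq]
        exact S.self_mem_leftTrans (by rw [S.src_comp r₁ t₂ hcr₁]; exact hTp.2.1 ht₂T)
      obtain ⟨v, hv, hcv, hqv⟩ := hq'
      have htrans : S.leftTrans (S.comp m (S.comp r₁ t₂)) V =
          S.leftTrans (S.comp m r') V := by
        apply S.leftTrans_eq_of_mem (h𝒰 V hV).2
        rw [hqv, ← S.comp_assoc m r' v (by rw [hτr']) hcv]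
        refine ⟨v, hv, ?_, rfl⟩
        show S.src (S.comp m r') = S.tgt v
        rw [S.src_comp m r' (by rw [hτr'])]; exact hcv
      rw [hE'A, hET, htrans]
    -- absorption of a coset by its own subgroupoid
    have habsorb : ∀ (U : Set G) (hU : U ∈ 𝒰) (z : G) (C : S.CosetFib U z),
        S.setMul C.val.val U = C.val.val := by
      intro U hU z C
      obtain ⟨g₀, hg₀σ, hg₀set⟩ := C.val.prop
      have hUp := h𝒮props U hU U (h𝒮mem U hU)
      rw [hg₀set,
        S.coset_setMul hUp.2.2.1 hUp.2.2.2 (h𝒰 U hU).2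
          (S.unit_sub_mul_inv (h𝒰 U hU).2) hg₀σ hg₀σ (S.tgt_of_src g₀),
        S.comp_src]
    -- existence of presented values
    have hexE : ∀ (U : Set G) (hU : U ∈ 𝒰) (C : S.CosetFib U x),
        ∃ E : S.CosetFib U y,
          ∃ (W : Set G) (hW : W ∈ 𝒰) (hxW : x ∈ W) (R : Set G) (_ : R ∈ 𝒮 U),
            W ⊆ S.setMul R (S.setInv R) ∧
            C.val.val = S.setMul (S.leftTrans x W) R ∧
            E.val.val = S.setMul (a W hW hxW).val.val R := by
      intro U hU C
      obtain ⟨W, hW, hxW, R, hR, g, hWR, hgR, hgτ, hgσ, hset, hset2⟩ :=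
        hexpres U hU C
      obtain ⟨m, hmσ, hmset⟩ := (a W hW hxW).val.prop
      have hmτ : S.tgt m = y := by
        apply (a W hW hxW).prop m
        rw [hmset]; exact S.self_mem_leftTrans hmσ
      obtain ⟨r, hrR, hτr⟩ := S.exists_tgt (hWR hmσ) (S.src_src m)
      have hRp := h𝒮props U hU R hR
      have hσmr : S.src (S.comp m r) ∈ U := by
        rw [S.src_comp m r (by rw [hτr])]; exact hRp.2.1 hrR
      refine ⟨⟨⟨S.leftTrans (S.comp m r) U, S.comp m r, hσmr, rfl⟩, ?_⟩,
        W, hW, hxW, R, hR, hWR, hset2, ?_⟩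
      · intro k hk
        rw [S.tgt_of_mem_leftTrans hk, S.tgt_comp m r (by rw [hτr]), hmτ]
      · show S.leftTrans (S.comp m r) U = S.setMul (a W hW hxW).val.val R
        rw [hmset,
          S.coset_setMul hRp.2.2.1 hRp.2.2.2 (h𝒰 W hW).2 hWR hmσ hrR hτr]
    -- uniqueness of presented values
    have huniq : ∀ (U : Set G) (hU : U ∈ 𝒰) (C : S.CosetFib U x)
        (E E' : S.CosetFib U y),
        (∃ (W : Set G) (hW : W ∈ 𝒰) (hxW : x ∈ W) (R : Set G) (_ : R ∈ 𝒮 U),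
          W ⊆ S.setMul R (S.setInv R) ∧
          C.val.val = S.setMul (S.leftTrans x W) R ∧
          E.val.val = S.setMul (a W hW hxW).val.val R) →
        (∃ (W : Set G) (hW : W ∈ 𝒰) (hxW : x ∈ W) (R : Set G) (_ : R ∈ 𝒮 U),
          W ⊆ S.setMul R (S.setInv R) ∧
          C.val.val = S.setMul (S.leftTrans x W) R ∧
          E'.val.val = S.setMul (a W hW hxW).val.val R) →
        E = E' := by
      intro U hU C E E' hE hE'
      have habs : C.val.val = S.setMul C.val.val U := (habsorb U hU x C).symm
      have key := hhomval U hU U hU U (h𝒮mem U hU)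
        (S.unit_sub_mul_inv (h𝒰 U hU).2) C C habs E E' hE hE'
      apply Subtype.ext; apply Subtype.ext
      rw [key, habsorb U hU y E]
    -- the unit coset is presented with value a_U
    have hpresunit : ∀ (U : Set G) (hU : U ∈ 𝒰) (hxU : x ∈ U),
        ∃ (W : Set G) (hW : W ∈ 𝒰) (hxW : x ∈ W) (R : Set G) (_ : R ∈ 𝒮 U),
          W ⊆ S.setMul R (S.setInv R) ∧
          (S.unitCosetFib U x hx hxU).val.val = S.setMul (S.leftTrans x W) R ∧
          (a U hU hxU).val.val = S.setMul (a W hW hxW).val.val R := by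
      intro U hU hxU
      obtain ⟨W, hW, hxW, hWU⟩ := hbasis x hx U ((h𝒰 U hU).1.mem_nhds hxU)
      have hUp := h𝒮props U hU U (h𝒮mem U hU)
      have hWUU : W ⊆ S.setMul U (S.setInv U) :=
        fun z hz => S.unit_sub_mul_inv (h𝒰 U hU).2 (hWU hz)
      refine ⟨W, hW, hxW, U, h𝒮mem U hU, hWUU, ?_, ?_⟩
      · show S.leftTrans x U = S.setMul (S.leftTrans x W) U
        rw [S.coset_setMul hUp.2.2.1 hUp.2.2.2 (h𝒰 W hW).2 hWUU
          (by rw [hx]; exact hxW) hxU (by rw [S.unit_tgt hx, hx]), hcxx]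
      · exact hcoh W hW hxW U hU hxU hWU
    refine ⟨⟨fun U hU C => (hexE U hU C).choose, ?_⟩, ?_⟩
    · intro U hU V hV T hT hUT C D hDset
      exact hhomval U hU V hV T hT hUT C D hDset _ _
        (hexE U hU C).choose_spec (hexE V hV D).choose_spec
    · intro U hU hxU
      exact huniq U hU (S.unitCosetFib U x hx hxU) _ _
        (hexE U hU (S.unitCosetFib U x hx hxU)).choose_spec (hpresunit U hU hxU)
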